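/- The maximum number of mutually orthogonal Latin squares of order n tends to infinity as n → ∞; that is, for every positive integer m there exists N such that for all n ≥ N there exist m mutually orthogonal Latin squares of order n. -/

import Mathlib

open SimpleGraph Finset

/-- `L` is a Latin square of order `n`: every symbol occurs exactly once in each row
and exactly once in each column. -/
def IsLatinSquare {n : ℕ} (L : Fin n → Fin n → Fin n) : Prop :=
  (∀ i, Function.Bijective (L i)) ∧ (∀ j, Function.Bijective fun i => L i j)

/-- Two Latin squares of order `n` are orthogonal: the `n²` ordered pairs of entries
`(L i j, M i j)` are pairwise distinct. -/
def AreOrthogonal {n : ℕ} (L M : Fin n → Fin n → Fin n) : Prop :=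
  Function.Injective fun q : Fin n × Fin n => (L q.1 q.2, M q.1 q.2)


/-- Existence of an orthogonal array with `K` columns, `n` symbols, `n^2` rows,
any two columns giving all pairs. (Equivalent to `K - 2` MOLS of order `n`.) -/
def OAE (K n : ℕ) : Prop :=
  ∃ f : Fin (n ^ 2) → Fin K → Fin n,
    ∀ i j : Fin K, i ≠ j → Function.Injective fun r => (f r i, f r j)

lemma oae_of {K n : ℕ} (R S : Type) [Fintype R] [Fintype S]
    (hR : Fintype.card R = n ^ 2) (hS : Fintype.card S = n)
    (f : R → Fin K → S)
    (h : ∀ i j : Fin K, i ≠ j → Function.Injective fun r => (f r i, f r j)) :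
    OAE K n := by
  have eR : Fin (n ^ 2) ≃ R := (finCongr hR.symm).trans (Fintype.equivFin R).symm
  have eS : S ≃ Fin n := (Fintype.equivFin S).trans (finCongr hS)
  refine ⟨fun r i => eS (f (eR r) i), fun i j hij => ?_⟩
  intro x y hxy
  simp only [Prod.mk.injEq, EmbeddingLike.apply_eq_iff_eq] at hxy
  have := h i j hij (a₁ := eR x) (a₂ := eR y) (by simpa [Prod.ext_iff] using hxy)
  exact eR.injective this

lemma oae_mono {K K' n : ℕ} (hK : K' ≤ K) (h : OAE K n) : OAE K' n := by
  obtain ⟨f, hf⟩ := h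
  exact ⟨fun r i => f r (Fin.castLE hK i), fun i j hij =>
    hf _ _ (fun he => hij (Fin.castLE_injective hK he))⟩

lemma oae_zero {K : ℕ} : OAE K 0 :=
  ⟨fun r _ => (by simpa using r.2 : False).elim, fun i j _ r => (by simpa using r.2 : False).elim⟩

lemma oae_one {K : ℕ} : OAE K 1 :=
  ⟨fun _ _ => 0, fun i j _ x y _ => by
    have hx := x.2; have hy := y.2
    exact Fin.ext (by omega)⟩

lemma oae_field {K : ℕ} (F : Type) [Field F] [Fintype F] (h : K ≤ Fintype.card F) :
    OAE K (Fintype.card F) := by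
  obtain ⟨x⟩ := Function.Embedding.nonempty_of_card_le (α := Fin K) (β := F) (by simpa using h)
  refine oae_of (F × F) F (by simp [sq]) rfl (fun p i => p.1 * x i + p.2) ?_
  intro i j hij p q hpq
  simp only [Prod.mk.injEq] at hpq
  obtain ⟨h1, h2⟩ := hpq
  have hx : x i ≠ x j := fun he => hij (x.injective he)
  have ha : p.1 = q.1 := by
    by_contra hne
    have := sub_eq_sub_iff_sub_eq_sub.mp (congrArg₂ (· - ·) h1 h2)
    have h3 : (p.1 - q.1) * (x i - x j) = 0 := by ring_nf; ring_nf at this; linear_combination this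
    rcases mul_eq_zero.mp h3 with h4 | h4
    · exact hne (sub_eq_zero.mp h4)
    · exact hx (sub_eq_zero.mp h4)
  have hb : p.2 = q.2 := by
    have := h1; rw [ha] at this; exact add_left_cancel this
  exact Prod.ext ha hb

lemma oae_prime_pow {K p e : ℕ} (hp : p.Prime) (he : e ≠ 0) (h : K ≤ p ^ e) :
    OAE K (p ^ e) := by
  haveI : Fact p.Prime := ⟨hp⟩
  haveI : Finite (GaloisField p e) := Nat.finite_of_card_ne_zero (by
    rw [GaloisField.card p e he]; exact Nat.pos_of_ne_zero (pow_ne_zero _ (Nat.Prime.pos hp).ne') |>.ne')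
  haveI : Fintype (GaloisField p e) := Fintype.ofFinite _
  have hcard : Fintype.card (GaloisField p e) = p ^ e := by
    have := GaloisField.card p e he
    rwa [Nat.card_eq_fintype_card] at this
  have := oae_field (GaloisField p e) (K := K) (by rw [hcard]; exact h)
  rwa [hcard] at this

lemma oae_mul {K a b : ℕ} (ha : OAE K a) (hb : OAE K b) : OAE K (a * b) := by
  obtain ⟨f, hf⟩ := ha
  obtain ⟨g, hg⟩ := hb
  refine oae_of (Fin (a ^ 2) × Fin (b ^ 2)) (Fin a × Fin b) (by simp; ring) (by simp)
    (fun r i => (f r.1 i, g r.2 i)) ?_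
  intro i j hij x y hxy
  simp only [Prod.mk.injEq] at hxy
  obtain ⟨⟨h1, h2⟩, h3, h4⟩ := hxy
  have e1 := hf i j hij (a₁ := x.1) (a₂ := y.1) (by simp [h1, h3])
  have e2 := hg i j hij (a₁ := x.2) (a₂ := y.2) (by simp [h2, h4])
  exact Prod.ext e1 e2

/-- If every prime factor `p` of `n` satisfies `K ≤ p ^ (multiplicity)`, then `OAE K n`. -/
lemma oae_good {K : ℕ} : ∀ n : ℕ, n ≠ 0 →
    (∀ p : ℕ, p.Prime → p ∣ n → K ≤ p ^ n.factorization p) → OAE K n := by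
  intro n
  induction n using Nat.strong_induction_on with
  | _ n ih =>
    intro hn hgood
    rcases eq_or_ne n 1 with rfl | hn1
    · exact oae_one
    · have h2 : 2 ≤ n := by omega
      have hpp : Nat.Prime n.minFac := Nat.minFac_prime hn1
      obtain ⟨p, hpeq⟩ : ∃ p, p = n.minFac := ⟨_, rfl⟩
      rw [← hpeq] at hpp
      have hpd : p ∣ n := hpeq ▸ Nat.minFac_dvd n
      obtain ⟨e, heeq⟩ : ∃ e, e = n.factorization p := ⟨_, rfl⟩
      have he0 : e ≠ 0 := by
        have := (Nat.Prime.factorization_pos_of_dvd hpp hn hpd)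
        omega
      have hdvd : p ^ e ∣ n := heeq ▸ Nat.ordProj_dvd n p
      obtain ⟨n', hneq⟩ := hdvd
      have hn' : n' ≠ 0 := by rintro rfl; simp [hneq] at hn
      have hpe : p ^ e ≠ 0 := pow_ne_zero _ hpp.pos.ne'
      have h1 : OAE K (p ^ e) := oae_prime_pow hpp he0 (heeq ▸ hgood p hpp hpd)
      have hpe1 : 1 < p ^ e := by
        have h2p := hpp.two_le
        have := Nat.le_self_pow he0 p
        omega
      have hn'lt : n' < n := by
        have hn'pos : 0 < n' := Nat.pos_of_ne_zero hn'
        rw [hneq]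
        calc n' = 1 * n' := (one_mul n').symm
        _ < p ^ e * n' := Nat.mul_lt_mul_of_lt_of_le hpe1 le_rfl hn'pos
      have hcop : ¬ p ∣ n' := by
        intro hd
        have : p ^ (e + 1) ∣ n := by
          rw [hneq, pow_succ]; exact mul_dvd_mul dvd_rfl hd
        have := (Nat.Prime.pow_dvd_iff_le_factorization hpp hn).mp this
        omega
      have h2' : OAE K n' := by
        apply ih n' hn'lt hn'
        intro q hq hqd
        have hqn : q ∣ n := hneq ▸ hqd.mul_left _
        have hfq : n.factorization q = n'.factorization q := by
          rw [hneq, Nat.factorization_mul hpe hn', Nat.Prime.factorization_pow hpp]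
          have hqp : q ≠ p := by rintro rfl; exact hcop hqd
          simp [Finsupp.single_apply, hqp.symm]
        rw [← hfq]
        exact hgood q hq hqn
      rw [hneq]
      exact oae_mul h1 h2'

lemma oae_cols_zero (n : ℕ) : OAE 0 n :=
  ⟨fun _ i => i.elim0, fun i => i.elim0⟩

lemma oae_wilson {K t m u : ℕ} (hu : u ≤ t)
    (hD : OAE (K + 1) t) (hA : OAE K m) (hB : OAE K (m + 1)) (hC : OAE K u) :
    OAE K (m * t + u) := by
  classical
  rcases Nat.eq_zero_or_pos K with rfl | hK
  · exact oae_cols_zero _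
  obtain ⟨d, hd⟩ := hD
  obtain ⟨a, ha⟩ := hA
  obtain ⟨b0, hb0⟩ := hB
  obtain ⟨c, hc⟩ := hC
  have hm2 : 0 < (m + 1) ^ 2 := by positivity
  set r0 : Fin ((m + 1) ^ 2) := ⟨0, hm2⟩ with hr0def
  set b : Fin ((m + 1) ^ 2) → Fin K → Fin (m + 1) :=
    fun s i => Equiv.swap (b0 r0 i) (Fin.last m) (b0 s i) with hbdef
  have hb : ∀ i j : Fin K, i ≠ j → Function.Injective fun s => (b s i, b s j) := by
    intro i j hij s s' h
    simp only [hbdef, Prod.mk.injEq, EmbeddingLike.apply_eq_iff_eq] at h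
    exact hb0 i j hij (Prod.ext h.1 h.2)
  have hbr0 : ∀ i, b r0 i = Fin.last m := by
    intro i; simp [hbdef]
  set P : Fin (t ^ 2) → Prop := fun r => (d r (Fin.last K)).val < u with hPdef
  have h0last : (0 : Fin (K + 1)) ≠ Fin.last K := by
    simp only [ne_eq, Fin.ext_iff, Fin.val_last, Fin.val_zero]
    omega
  have hgbij : Function.Bijective (fun r => (d r 0, d r (Fin.last K))) := by
    rw [Fintype.bijective_iff_injective_and_card]
    exact ⟨hd 0 (Fin.last K) h0last, by simp [sq]⟩
  have hPcard : Fintype.card {r : Fin (t ^ 2) // P r} = t * u := by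
    have e1 : {r : Fin (t ^ 2) // P r} ≃ {p : Fin t × Fin t // p.2.val < u} :=
      (Equiv.ofBijective _ hgbij).subtypeEquiv (fun r => Iff.rfl)
    have e2 : {p : Fin t × Fin t // p.2.val < u} ≃ Fin t × Fin u :=
      { toFun := fun x => (x.1.1, ⟨x.1.2.1, x.2⟩)
        invFun := fun y => ⟨(y.1, ⟨y.2.1, lt_of_lt_of_le y.2.2 hu⟩), y.2.2⟩
        left_inv := fun x => rfl
        right_inv := fun y => rfl }
    rw [Fintype.card_congr (e1.trans e2)]
    simp
  have hPcard' : Fintype.card {r : Fin (t ^ 2) // ¬ P r} = t ^ 2 - t * u := by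
    rw [Fintype.card_subtype_compl, hPcard]
    simp
  have hr0card : Fintype.card {s : Fin ((m + 1) ^ 2) // ¬ (s = r0)} = (m + 1) ^ 2 - 1 := by
    rw [Fintype.card_subtype_compl, Fintype.card_subtype_eq]
    simp
  have hcardR : Fintype.card
      ((({r : Fin (t ^ 2) // ¬ P r} × Fin (m ^ 2)) ⊕
        ({r : Fin (t ^ 2) // P r} × {s : Fin ((m + 1) ^ 2) // ¬ (s = r0)})) ⊕ Fin (u ^ 2))
      = (m * t + u) ^ 2 := by
    rw [Fintype.card_sum, Fintype.card_sum, Fintype.card_prod, Fintype.card_prod,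
      hPcard, hPcard', hr0card, Fintype.card_fin, Fintype.card_fin]
    obtain ⟨v, rfl⟩ := Nat.exists_eq_add_of_le hu
    have e1 : (u + v) ^ 2 - (u + v) * u = (u + v) * v := by
      have : (u + v) ^ 2 = (u + v) * u + (u + v) * v := by ring
      omega
    have e2 : (m + 1) ^ 2 - 1 = m ^ 2 + 2 * m := by
      have : (m + 1) ^ 2 = m ^ 2 + 2 * m + 1 := by ring
      omega
    rw [e1, e2]
    ring
  have hcardS : Fintype.card ((Fin m × Fin t) ⊕ Fin u) = m * t + u := by simp
  refine oae_of _ _ hcardR hcardS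
    (fun x i => match x with
      | .inl (.inl x) => .inl (a x.2 i, d x.1.1 i.castSucc)
      | .inl (.inr x) =>
          if h : b x.2.1 i = Fin.last m then .inr ⟨(d x.1.1 (Fin.last K)).val, x.1.2⟩
          else .inl ((b x.2.1 i).castPred h, d x.1.1 i.castSucc)
      | .inr e => .inr (c e i)) ?_
  intro i j hij x y hxy
  have hij' : i.castSucc ≠ j.castSucc := fun h => hij (Fin.castSucc_injective K h)
  have hil : i.castSucc ≠ Fin.last K := (Fin.castSucc_lt_last i).ne
  have hjl : j.castSucc ≠ Fin.last K := (Fin.castSucc_lt_last j).ne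
  have h1 := congrArg Prod.fst hxy
  have h2 := congrArg Prod.snd hxy
  clear hxy
  have hBr0 : ∀ (s : Fin ((m + 1) ^ 2)), b s i = Fin.last m → b s j = Fin.last m → s = r0 := by
    intro s hsi hsj
    exact hb i j hij (a₁ := s) (a₂ := r0)
      (show (b s i, b s j) = (b r0 i, b r0 j) by rw [hsi, hsj, hbr0, hbr0])
  rcases x with (⟨⟨r, hr⟩, s⟩ | ⟨⟨r, hr⟩, ⟨s, hs⟩⟩) | e <;>
    rcases y with (⟨⟨r', hr'⟩, s'⟩ | ⟨⟨r', hr'⟩, ⟨s', hs'⟩⟩) | e' <;>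
    dsimp only at h1 h2
  -- case AA
  · have hdi : d r i.castSucc = d r' i.castSucc := congrArg Prod.snd (Sum.inl.inj h1)
    have hdj : d r j.castSucc = d r' j.castSucc := congrArg Prod.snd (Sum.inl.inj h2)
    have hrr : r = r' := hd _ _ hij' (by rw [Prod.ext_iff]; exact ⟨hdi, hdj⟩)
    have hai : a s i = a s' i := congrArg Prod.fst (Sum.inl.inj h1)
    have haj : a s j = a s' j := congrArg Prod.fst (Sum.inl.inj h2)
    have hss : s = s' := ha i j hij (a₁ := s) (a₂ := s') (by rw [Prod.ext_iff]; exact ⟨hai, haj⟩)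
    subst hrr hss
    rfl
  -- case AB
  · by_cases hbi : b s' i = Fin.last m
    · rw [dif_pos hbi] at h1; exact absurd h1 (by simp)
    · rw [dif_neg hbi] at h1
      by_cases hbj : b s' j = Fin.last m
      · rw [dif_pos hbj] at h2; exact absurd h2 (by simp)
      · rw [dif_neg hbj] at h2
        have hdi : d r i.castSucc = d r' i.castSucc := congrArg Prod.snd (Sum.inl.inj h1)
        have hdj : d r j.castSucc = d r' j.castSucc := congrArg Prod.snd (Sum.inl.inj h2)
        have hrr : r = r' := hd _ _ hij' (by rw [Prod.ext_iff]; exact ⟨hdi, hdj⟩)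
        rw [hrr] at hr
        exact absurd hr' hr
  -- case AC
  · exact absurd h1 (by simp)
  -- case BA
  · by_cases hbi : b s i = Fin.last m
    · rw [dif_pos hbi] at h1; exact absurd h1 (by simp)
    · rw [dif_neg hbi] at h1
      by_cases hbj : b s j = Fin.last m
      · rw [dif_pos hbj] at h2; exact absurd h2 (by simp)
      · rw [dif_neg hbj] at h2
        have hdi : d r i.castSucc = d r' i.castSucc := congrArg Prod.snd (Sum.inl.inj h1)
        have hdj : d r j.castSucc = d r' j.castSucc := congrArg Prod.snd (Sum.inl.inj h2)
        have hrr : r = r' := hd _ _ hij' (by rw [Prod.ext_iff]; exact ⟨hdi, hdj⟩)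
        rw [hrr] at hr
        exact absurd hr hr'
  -- case BB
  · by_cases hbi : b s i = Fin.last m <;> by_cases hbi' : b s' i = Fin.last m <;>
      [rw [dif_pos hbi, dif_pos hbi'] at h1; rw [dif_pos hbi, dif_neg hbi'] at h1;
       rw [dif_neg hbi, dif_pos hbi'] at h1; rw [dif_neg hbi, dif_neg hbi'] at h1]
    · by_cases hbj : b s j = Fin.last m
      · exact absurd (hBr0 s hbi hbj) hs
      · by_cases hbj' : b s' j = Fin.last m
        · exact absurd (hBr0 s' hbi' hbj') hs'
        · rw [dif_neg hbj, dif_neg hbj'] at h2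
          have hval := congrArg Fin.val (Sum.inr.inj h1)
          have hlast : d r (Fin.last K) = d r' (Fin.last K) := Fin.ext hval
          have hdj : d r j.castSucc = d r' j.castSucc := congrArg Prod.snd (Sum.inl.inj h2)
          have hrr : r = r' := hd (Fin.last K) j.castSucc (Ne.symm hjl)
            (by rw [Prod.ext_iff]; exact ⟨hlast, hdj⟩)
          have hbsj : b s j = b s' j := by
            have h3 := congrArg Fin.castSucc (congrArg Prod.fst (Sum.inl.inj h2))
            rwa [Fin.castSucc_castPred, Fin.castSucc_castPred] at h3
          have hbsi : b s i = b s' i := by rw [hbi, hbi']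
          have hss : s = s' := hb i j hij (a₁ := s) (a₂ := s')
            (by rw [Prod.ext_iff]; exact ⟨hbsi, hbsj⟩)
          subst hrr hss
          rfl
    · exact absurd h1 (by simp)
    · exact absurd h1 (by simp)
    · have hdi : d r i.castSucc = d r' i.castSucc := congrArg Prod.snd (Sum.inl.inj h1)
      have hbsi : b s i = b s' i := by
        have h3 := congrArg Fin.castSucc (congrArg Prod.fst (Sum.inl.inj h1))
        rwa [Fin.castSucc_castPred, Fin.castSucc_castPred] at h3
      by_cases hbj : b s j = Fin.last m <;> by_cases hbj' : b s' j = Fin.last m <;>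
        [rw [dif_pos hbj, dif_pos hbj'] at h2; rw [dif_pos hbj, dif_neg hbj'] at h2;
         rw [dif_neg hbj, dif_pos hbj'] at h2; rw [dif_neg hbj, dif_neg hbj'] at h2]
      · have hval := congrArg Fin.val (Sum.inr.inj h2)
        have hlast : d r (Fin.last K) = d r' (Fin.last K) := Fin.ext hval
        have hrr : r = r' := hd i.castSucc (Fin.last K) hil
          (by rw [Prod.ext_iff]; exact ⟨hdi, hlast⟩)
        have hbsj : b s j = b s' j := by rw [hbj, hbj']
        have hss : s = s' := hb i j hij (a₁ := s) (a₂ := s')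
          (by rw [Prod.ext_iff]; exact ⟨hbsi, hbsj⟩)
        subst hrr hss
        rfl
      · exact absurd h2 (by simp)
      · exact absurd h2 (by simp)
      · have hdj : d r j.castSucc = d r' j.castSucc := congrArg Prod.snd (Sum.inl.inj h2)
        have hrr : r = r' := hd _ _ hij' (by rw [Prod.ext_iff]; exact ⟨hdi, hdj⟩)
        have hbsj : b s j = b s' j := by
          have h3 := congrArg Fin.castSucc (congrArg Prod.fst (Sum.inl.inj h2))
          rwa [Fin.castSucc_castPred, Fin.castSucc_castPred] at h3
        have hss : s = s' := hb i j hij (a₁ := s) (a₂ := s')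
          (by rw [Prod.ext_iff]; exact ⟨hbsi, hbsj⟩)
        subst hrr hss
        rfl
  -- case BC
  · by_cases hbi : b s i = Fin.last m
    · by_cases hbj : b s j = Fin.last m
      · exact absurd (hBr0 s hbi hbj) hs
      · rw [dif_neg hbj] at h2; exact absurd h2 (by simp)
    · rw [dif_neg hbi] at h1; exact absurd h1 (by simp)
  -- case CA
  · exact absurd h1 (by simp)
  -- case CB
  · by_cases hbi : b s' i = Fin.last m
    · by_cases hbj : b s' j = Fin.last m
      · exact absurd (hBr0 s' hbi hbj) hs'
      · rw [dif_neg hbj] at h2; exact absurd h2 (by simp)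
    · rw [dif_neg hbi] at h1; exact absurd h1 (by simp)
  -- case CC
  · have h1' : c e i = c e' i := Sum.inr.inj h1
    have h2' : c e j = c e' j := Sum.inr.inj h2
    have := hc i j hij (a₁ := e) (a₂ := e') (by rw [Prod.ext_iff]; exact ⟨h1', h2'⟩)
    rw [this]

/-- If every small prime dividing `n` divides it with multiplicity at least `K`,
then `OAE K n`. -/
lemma oae_smallfree {K n : ℕ} (hn : n ≠ 0)
    (h : ∀ p : ℕ, p.Prime → p ∣ n → p ≤ K → p ^ K ∣ n) : OAE K n := by
  apply oae_good n hn
  intro p hp hpd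
  have hv : 0 < n.factorization p := Nat.Prime.factorization_pos_of_dvd hp hn hpd
  by_cases hpK : p ≤ K
  · have hdvd : p ^ K ∣ n := h p hp hpd hpK
    have hKv : K ≤ n.factorization p := (Nat.Prime.pow_dvd_iff_le_factorization hp hn).mp hdvd
    calc K ≤ 2 ^ K := (Nat.lt_two_pow_self (n := K)).le
    _ ≤ p ^ K := Nat.pow_le_pow_left hp.two_le K
    _ ≤ p ^ n.factorization p := Nat.pow_le_pow_right hp.pos hKv
  · calc K ≤ p := by omega
    _ = p ^ 1 := (pow_one p).symm
    _ ≤ p ^ n.factorization p := Nat.pow_le_pow_right hp.pos hv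

lemma oae_all_large (K : ℕ) (hK : 2 ≤ K) : ∃ N : ℕ, ∀ n : ℕ, N ≤ n → OAE K n := by
  classical
  set SP := (K + 2).primesBelow with hSP
  set Q := ∏ p ∈ SP, p ^ (K + 1) with hQ
  -- basic facts about Q
  have hmemSP : ∀ p, p ∈ SP ↔ p < K + 2 ∧ p.Prime := by
    intro p; rw [hSP]; exact Nat.mem_primesBelow
  have h2SP : 2 ∈ SP := (hmemSP 2).mpr ⟨by omega, Nat.prime_two⟩
  have hQpos : 0 < Q := by
    rw [hQ]
    apply Finset.prod_pos
    intro p hp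
    exact pow_pos ((hmemSP p).mp hp).2.pos _
  have h2Q : 2 ^ (K + 1) ∣ Q := Finset.dvd_prod_of_mem _ h2SP
  have hQge : 2 ^ (K + 1) ≤ Q := Nat.le_of_dvd hQpos h2Q
  have hQbig : K + 4 ≤ Q := by
    have h1 : K + 1 < 2 ^ (K + 1) := Nat.lt_two_pow_self (n := K + 1)
    have h2 : 2 ^ 3 ≤ 2 ^ (K + 1) := Nat.pow_le_pow_right (by omega) (by omega)
    -- K ≥ 2 so 2^(K+1) ≥ 8 and 2^(K+1) > K+1; need K + 4 ≤ 2^(K+1)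
    have h3 : K + 4 ≤ 2 ^ (K + 1) := by
      clear * - hK
      induction K with
      | zero => omega
      | succ k ih =>
          by_cases hk : 2 ≤ k
          · have := ih hk
            have : 2 ^ (k + 1) ≤ 2 ^ (k + 2) := Nat.pow_le_pow_right (by omega) (by omega)
            omega
          · interval_cases k <;> simp <;> omega
    omega
  -- membership of small primes in Q
  have hpQ : ∀ p, p.Prime → p ≤ K + 1 → p ^ (K + 1) ∣ Q := by
    intro p hp hpK
    exact Finset.dvd_prod_of_mem _ ((hmemSP p).mpr ⟨by omega, hp⟩)
  have hprimeQ : ∀ p, p.Prime → p ∣ Q → p ≤ K + 1 := by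
    intro p hp hpd
    rw [hQ] at hpd
    obtain ⟨q, hq, hpq⟩ := (Nat.Prime.prime hp).exists_mem_finset_dvd hpd
    have hq' := (hmemSP q).mp hq
    have : p = q := (Nat.prime_dvd_prime_iff_eq hp hq'.2).mp (hp.dvd_of_dvd_pow hpq)
    omega
  -- the two base ingredients
  have hm1 : (Q - 1) + 1 = Q := by omega
  have hOAEm : OAE K (Q - 1) := by
    apply oae_smallfree (by omega)
    intro p hp hpd hpK
    exfalso
    have hdQ : p ∣ Q := dvd_trans (dvd_pow_self p (by omega : K + 1 ≠ 0)) (hpQ p hp (by omega))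
    have h1 : p ∣ 1 := by
      have := Nat.dvd_sub hdQ hpd
      rwa [Nat.sub_sub_self (by omega : 1 ≤ Q)] at this
    exact (Nat.Prime.one_lt hp).ne' (Nat.dvd_one.mp h1)
  have hOAEm1 : OAE K Q := by
    apply oae_smallfree (by omega)
    intro p hp hpd hpK
    exact dvd_trans (pow_dvd_pow p (by omega : K ≤ K + 1)) (hpQ p hp (by omega))
  -- main bound
  refine ⟨Q ^ 4, fun n hn => ?_⟩
  set c := ∏ p ∈ SP.filter (fun p => ¬ p ∣ n), p ^ (K + 1) with hc
  have hcQ : c ∣ Q := Finset.prod_dvd_prod_of_subset _ _ _ (Finset.filter_subset _ _)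
  have hcpos : 0 < c := Nat.pos_of_dvd_of_pos hcQ hQpos
  have hcle : c ≤ Q := Nat.le_of_dvd hQpos hcQ
  have hpc : ∀ p, p.Prime → p ∣ n → ¬ p ∣ c := by
    intro p hp hpn hpdc
    rw [hc] at hpdc
    obtain ⟨q, hq, hpq⟩ := (Nat.Prime.prime hp).exists_mem_finset_dvd hpdc
    rw [Finset.mem_filter] at hq
    have hq2 := ((hmemSP q).mp hq.1).2
    have : p = q := (Nat.prime_dvd_prime_iff_eq hp hq2).mp (hp.dvd_of_dvd_pow hpq)
    exact hq.2 (this ▸ hpn)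
  have hpc' : ∀ p, p.Prime → p ≤ K + 1 → ¬ p ∣ n → p ^ (K + 1) ∣ c := by
    intro p hp hpK hpn
    apply Finset.dvd_prod_of_mem
    rw [Finset.mem_filter]
    exact ⟨(hmemSP p).mpr ⟨by omega, hp⟩, hpn⟩
  -- construct t
  set m := Q - 1 with hmdef
  have hmpos : 0 < m := by omega
  set r := (c + n * (Q - 1)) % Q with hrdef
  have hrQ : r < Q := Nat.mod_lt _ hQpos
  set B := n / m with hBdef
  set t := r + Q * ((B - r) / Q) with htdef
  -- size facts
  have hnQ4 : Q ^ 4 ≤ n := hn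
  have hBge : Q ^ 2 + Q ≤ B := by
    rw [hBdef, Nat.le_div_iff_mul_le hmpos]
    have hQQ2 : Q ≤ Q ^ 2 := Nat.le_self_pow (by omega) Q
    calc (Q ^ 2 + Q) * m ≤ (Q ^ 2 + Q) * Q := by
          apply Nat.mul_le_mul_left; omega
    _ ≤ (Q ^ 2 + Q ^ 2) * Q := Nat.mul_le_mul_right Q (by omega)
    _ = 2 * (Q * Q * Q) := by ring
    _ ≤ Q * (Q * Q * Q) := Nat.mul_le_mul_right _ (by omega)
    _ = Q ^ 4 := by ring
    _ ≤ n := hnQ4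
  have hrB : r ≤ B := by omega
  have htB : t ≤ B := by
    rw [htdef]
    have h1 : Q * ((B - r) / Q) ≤ B - r := by
      calc Q * ((B - r) / Q) = (B - r) / Q * Q := by ring
      _ ≤ B - r := Nat.div_mul_le_self _ _
    omega
  have htlow : B < t + Q := by
    rw [htdef]
    have hmod := Nat.div_add_mod (B - r) Q
    have hlt := Nat.mod_lt (B - r) hQpos
    omega
  have hmtn : m * t ≤ n := by
    calc m * t ≤ m * B := Nat.mul_le_mul_left _ htB
    _ ≤ n := by
        rw [hBdef, Nat.mul_comm]
        exact Nat.div_mul_le_self n m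
  set u := n - m * t with hudef
  have hneq : n = m * t + u := by omega
  have htge : Q ^ 2 + 1 ≤ t := by omega
  have hub : u < m + m * Q := by
    have hmod := Nat.div_add_mod n m
    have hlt := Nat.mod_lt n hmpos
    have h1 : n < m * B + m := by rw [hBdef]; omega
    have h2 : m * B ≤ m * (t + Q) := Nat.mul_le_mul_left _ (by omega)
    have h3 : m * (t + Q) = m * t + m * Q := by ring
    omega
  have hut : u ≤ t := by
    have : m + m * Q ≤ Q ^ 2 + 1 := by nlinarith
    omega
  -- congruences
  have hQm : Q * t = m * t + t := by
    have : Q = m + 1 := by omega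
    rw [this]; ring
  have ht_cong : t ≡ c + n * (Q - 1) [MOD Q] := by
    have h1 : t ≡ r [MOD Q] := by
      rw [htdef, Nat.ModEq]
      simp [Nat.add_mul_mod_self_left]
    exact h1.trans (Nat.mod_modEq _ _)
  have hkey : t + n ≡ c [MOD Q] := by
    have h2 : t + n ≡ c + n * (Q - 1) + n [MOD Q] := ht_cong.add_right n
    have hx : c + n * (Q - 1) + n = c + n * Q := by
      have : n * (Q - 1) + n = n * Q := by
        have h3 : Q - 1 + 1 = Q := by omega
        calc n * (Q - 1) + n = n * (Q - 1 + 1) := by ring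
        _ = n * Q := by rw [h3]
      omega
    rw [hx] at h2
    have h3 : c + n * Q ≡ c [MOD Q] := by
      rw [Nat.ModEq]
      simp [Nat.add_mul_mod_self_right]
    exact h2.trans h3
  have hucong : u ≡ c [MOD Q] := by
    have he : u + Q * t = n + t := by omega
    have h1 : u + Q * t ≡ u [MOD Q] := by
      rw [Nat.ModEq]
      simp [Nat.add_mul_mod_self_left]
    have h2 : u ≡ n + t [MOD Q] := h1.symm.trans (by rw [he])
    exact h2.trans (show n + t ≡ c [MOD Q] by rw [Nat.add_comm]; exact hkey)
  -- t has no small prime factors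
  have htfree : ∀ p, p.Prime → p ≤ K + 1 → ¬ p ∣ t := by
    intro p hp hpK hpt
    have hpQ' : p ∣ Q := dvd_trans (dvd_pow_self p (by omega : K + 1 ≠ 0)) (hpQ p hp hpK)
    have hkp : t + n ≡ c [MOD p] := hkey.of_dvd hpQ'
    by_cases hpn : p ∣ n
    · have hpc1 : p ∣ c := by
        have h1 : (t + n) % p = c % p := hkp
        have h2 : p ∣ t + n := Nat.dvd_add hpt hpn
        have h3 : (t + n) % p = 0 := Nat.mod_eq_zero_of_dvd  h2
        exact Nat.dvd_iff_mod_eq_zero.mpr (by omega)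
      exact hpc p hp hpn hpc1
    · have hpc2 : p ∣ c := dvd_trans (dvd_pow_self p (by omega : K + 1 ≠ 0)) (hpc' p hp hpK hpn)
      have h2 : p ∣ t + n := by
        have : (t + n) % p = c % p := hkp
        have hc0 : c % p = 0 := Nat.mod_eq_zero_of_dvd  hpc2
        exact Nat.dvd_iff_mod_eq_zero.mpr (by omega)
      exact hpn (by
        have := Nat.dvd_sub h2 hpt
        rwa [Nat.add_sub_cancel_left] at this)
  have hOAEt : OAE (K + 1) t := by
    apply oae_smallfree (by omega)
    intro p hp hpd hpK
    exact absurd hpd (htfree p hp hpK)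
  have hOAEu : OAE K u := by
    rcases Nat.eq_zero_or_pos u with hu0 | hupos
    · rw [hu0]; exact oae_zero
    apply oae_smallfree (by omega)
    intro p hp hpu hpK
    by_cases hpn : p ∣ n
    · exfalso
      have hpQ' : p ∣ Q := dvd_trans (dvd_pow_self p (by omega : K + 1 ≠ 0)) (hpQ p hp (by omega))
      have h1 : u ≡ c [MOD p] := hucong.of_dvd hpQ'
      have hpc1 : p ∣ c := by
        have : u % p = c % p := h1
        have hu0 : u % p = 0 := Nat.mod_eq_zero_of_dvd  hpu
        exact Nat.dvd_iff_mod_eq_zero.mpr (by omega)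
      exact hpc p hp hpn hpc1
    · have hdc : p ^ (K + 1) ∣ c := hpc' p hp (by omega) hpn
      have hdQ : p ^ (K + 1) ∣ Q := hpQ p hp (by omega)
      have h1 : u ≡ c [MOD p ^ K] := hucong.of_dvd
        (dvd_trans (pow_dvd_pow p (by omega : K ≤ K + 1)) hdQ)
      have hc0 : c ≡ 0 [MOD p ^ K] := Nat.modEq_zero_iff_dvd.mpr
        (dvd_trans (pow_dvd_pow p (by omega : K ≤ K + 1)) hdc)
      exact Nat.modEq_zero_iff_dvd.mp (h1.trans hc0)
  have hw := oae_wilson hut hOAEt hOAEm (hm1 ▸ hOAEm1) hOAEu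
  rwa [← hneq] at hw

lemma mols_of_oae {m n : ℕ} (h : OAE (m + 2) n) :
    ∃ L : Fin m → Fin n → Fin n → Fin n,
      (∀ t, IsLatinSquare (L t)) ∧
      ∀ t t' : Fin m, t ≠ t' → AreOrthogonal (L t) (L t') := by
  obtain ⟨f, hf⟩ := h
  have h01 : (0 : Fin (m + 2)) ≠ 1 := by simp [Fin.ext_iff]
  have hg : Function.Bijective (fun r => (f r 0, f r 1)) := by
    rw [Fintype.bijective_iff_injective_and_card]
    exact ⟨hf 0 1 h01, by simp [sq]⟩
  set E := Equiv.ofBijective _ hg with hE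
  have hE0 : ∀ p : Fin n × Fin n, f (E.symm p) 0 = p.1 := by
    intro p
    have := E.apply_symm_apply p
    exact congrArg Prod.fst this
  have hE1 : ∀ p : Fin n × Fin n, f (E.symm p) 1 = p.2 := by
    intro p
    have := E.apply_symm_apply p
    exact congrArg Prod.snd this
  have hcol : ∀ t : Fin m, ((⟨t.1 + 2, by omega⟩ : Fin (m + 2)) : Fin (m+2)) ≠ 0 ∧
      ((⟨t.1 + 2, by omega⟩ : Fin (m + 2)) : Fin (m+2)) ≠ 1 := by
    intro t; constructor <;> simp [Fin.ext_iff]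
  refine ⟨fun t i j => f (E.symm (i, j)) ⟨t.1 + 2, by omega⟩, ?_, ?_⟩
  · intro t
    constructor
    · intro i
      rw [Fintype.bijective_iff_injective_and_card]
      refine ⟨?_, rfl⟩
      intro j j' hjj
      have hr := hf 0 ⟨t.1 + 2, by omega⟩ (Ne.symm (hcol t).1)
        (a₁ := E.symm (i, j)) (a₂ := E.symm (i, j'))
        (by simp [hE0, hjj])
      have := congrArg (fun r => f r 1) (hr)
      simpa [hE1] using this
    · intro j
      rw [Fintype.bijective_iff_injective_and_card]
      refine ⟨?_, rfl⟩
      intro i i' hii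
      have hr := hf 1 ⟨t.1 + 2, by omega⟩ (Ne.symm (hcol t).2)
        (a₁ := E.symm (i, j)) (a₂ := E.symm (i', j))
        (by simp [hE1, hii])
      have := congrArg (fun r => f r 0) (hr)
      simpa [hE0] using this
  · intro t t' htt
    intro q q' hqq
    simp only [Prod.mk.injEq] at hqq
    have hcc : (⟨t.1 + 2, by omega⟩ : Fin (m + 2)) ≠ ⟨t'.1 + 2, by omega⟩ := by
      simp only [ne_eq, Fin.mk.injEq]
      intro hc
      exact htt (Fin.ext (by omega))
    have hr := hf _ _ hcc (a₁ := E.symm (q.1, q.2)) (a₂ := E.symm (q'.1, q'.2))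
      (by simp [hqq.1, hqq.2])
    have : (q.1, q.2) = (q'.1, q'.2) := E.symm.injective hr
    exact Prod.ext (congrArg Prod.fst this) (congrArg Prod.snd this)

/-- The maximum number of mutually orthogonal Latin squares of order `n` tends to infinity:
for every `m` there is `N` such that for all `n ≥ N` there exist `m` mutually orthogonal
Latin squares of order `n`. -/
theorem MOLS_tendsto_atTop (m : ℕ) :
    ∃ N : ℕ, ∀ n : ℕ, N ≤ n →
      ∃ L : Fin m → Fin n → Fin n → Fin n,
        (∀ t, IsLatinSquare (L t)) ∧
        ∀ t t' : Fin m, t ≠ t' → AreOrthogonal (L t) (L t') := by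
  obtain ⟨N, hN⟩ := oae_all_large (m + 2) (by omega)
  exact ⟨N, fun n hn => mols_of_oae (hN n hn)⟩
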